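/- Let q be a prime power, k a positive integer, n = 2k, and let g ∈ F_q[x] be a monic divisor of x^n − 1 of degree k. If β ∈ F_{q^n} satisfies Ord(β) = g, then g ≠ x^k − 1 if and only if F_q(β) = F_{q^n}. -/

import Mathlib

open Polynomial

/-- `Lf q f α = Σ aᵢ α^{qⁱ}`, the action of the linearized `q`-associate of `f` on `α`. -/
noncomputable def Lf (q : ℕ) {F E : Type*} [Field F] [Field E] [Algebra F E]
    (f : F[X]) (α : E) : E :=
  f.sum fun i a => algebraMap F E a * α ^ q ^ i

/-- `α` is a primitive element: it generates the multiplicative group. -/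
def IsPrimitiveElem {E : Type*} [Field E] (α : E) : Prop :=
  ∀ β : E, β ≠ 0 → ∃ j : ℕ, β = α ^ j

/-- `α` is `k`-normal over `F`: the `F`-span of `α, α^q, …, α^{q^{n-1}}` has dimension `n - k`. -/
def IskNormal (q n k : ℕ) {F E : Type*} [Field F] [Field E] [Algebra F E] (α : E) : Prop :=
  Module.finrank F ↥(Submodule.span F (Set.range fun i : Fin n => α ^ q ^ (i : ℕ))) = n - k

/-- `g` is the `F_q`-order of `α`: the monic polynomial of least degree with `L_g(α) = 0`. -/
def IsOrd (q : ℕ) {F E : Type*} [Field F] [Field E] [Algebra F E] (α : E) (g : F[X]) : Prop :=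
  g.Monic ∧ Lf q g α = 0 ∧ ∀ h : F[X], h.Monic → Lf q h α = 0 → g.degree ≤ h.degree

/-- `α` is `m`-free: for every divisor `d > 1` of `m`, `α` is not a `d`-th power. -/
def IsMFree {E : Type*} [Field E] (m : ℕ) (α : E) : Prop :=
  ∀ d : ℕ, d ∣ m → 1 < d → ¬ ∃ β : E, β ^ d = α

/-- Property (A) (with `n = 2k`): `g` is a monic divisor of `x^{2k} - 1` of degree `k`,
`g ≠ x^k - 1`, and `(x - 1) ∣ g`. -/
def SatisfiesA {F : Type*} [Field F] (k : ℕ) (g : F[X]) : Prop :=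
  g.Monic ∧ g ∣ (X ^ (2 * k) - 1) ∧ g.natDegree = k ∧ g ≠ X ^ k - 1 ∧ (X - 1 : F[X]) ∣ g

/-- `W(t) = 2^{ω(t)}`, the number of squarefree divisors of the positive integer `t`. -/
def Wnat (t : ℕ) : ℕ := 2 ^ t.primeFactors.card

/-- `W(f)`, the number of squarefree monic divisors of the polynomial `f`. -/
noncomputable def Wpoly {F : Type*} [Field F] (f : F[X]) : ℕ :=
  Nat.card {d : F[X] // d.Monic ∧ Squarefree d ∧ d ∣ f}

section Helpers

variable {F E : Type*} [Field F] [Field E] [Algebra F E]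

lemma pow_apply_eq (q : ℕ) (σ : E →ₗ[F] E) (hσ : ∀ x : E, σ x = x ^ q) (e : ℕ) (α : E) :
    (σ ^ e) α = α ^ q ^ e := by
  induction e generalizing α with
  | zero => simp
  | succ n ih =>
    rw [pow_succ, Module.End.mul_apply, hσ, ih, ← pow_mul, pow_succ']

lemma Lf_eq_aeval (q : ℕ) (σ : E →ₗ[F] E) (hσ : ∀ x : E, σ x = x ^ q) (f : F[X]) (α : E) :
    Lf q f α = Polynomial.aeval σ f α := by
  rw [Lf, aeval_def, eval₂_eq_sum, Polynomial.sum, Polynomial.sum, LinearMap.sum_apply]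
  refine Finset.sum_congr rfl fun i _ => ?_
  rw [Module.End.mul_apply, Module.algebraMap_end_apply, pow_apply_eq q σ hσ, Algebra.smul_def]

lemma Lf_X_pow_sub_one (q : ℕ) (σ : E →ₗ[F] E) (hσ : ∀ x : E, σ x = x ^ q) (m : ℕ) (α : E) :
    Lf q (X ^ m - 1 : F[X]) α = α ^ q ^ m - α := by
  rw [Lf_eq_aeval q σ hσ, map_sub, map_pow, aeval_X, map_one, LinearMap.sub_apply,
    pow_apply_eq q σ hσ, Module.End.one_apply]

lemma ord_dvd (q : ℕ) (σ : E →ₗ[F] E) (hσ : ∀ x : E, σ x = x ^ q) {β : E} {g h : F[X]}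
    (hord : IsOrd q β g) (hh : Lf q h β = 0) : g ∣ h := by
  obtain ⟨hgm, hg0, hmin⟩ := hord
  rw [← modByMonic_eq_zero_iff_dvd hgm]
  by_contra hr
  have hmod : Lf q (h %ₘ g) β = 0 := by
    have hdecomp : h %ₘ g = h - g * (h /ₘ g) := by
      rw [eq_sub_iff_add_eq, modByMonic_add_div h g]
    rw [Lf_eq_aeval q σ hσ] at hh hg0 ⊢
    rw [hdecomp, map_sub, mul_comm, map_mul, LinearMap.sub_apply, Module.End.mul_apply, hg0,
      map_zero, hh, sub_zero]
  set r := h %ₘ g with hrdef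
  have hmon : ((r * C (leadingCoeff r)⁻¹)).Monic := monic_mul_leadingCoeff_inv hr
  have hz : Lf q (r * C (leadingCoeff r)⁻¹) β = 0 := by
    have h0 : (Polynomial.aeval σ r) β = 0 := by
      rw [← Lf_eq_aeval q σ hσ]; exact hmod
    rw [Lf_eq_aeval q σ hσ, mul_comm, map_mul, Module.End.mul_apply, h0, map_zero]
  have hle := hmin _ hmon hz
  rw [degree_mul_leadingCoeff_inv r hr] at hle
  exact absurd (degree_modByMonic_lt h hgm) (not_lt.mpr hle)

end Helpers

/-- with `n = 2k`, if `g` is a monic degree-`k` divisor of `x^n - 1` and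
`Ord(β) = g`, then `g ≠ x^k - 1` iff `β` generates `F_{q^n}` over `F_q`. -/
theorem stmt5 (q k : ℕ) (hq : IsPrimePow q) (hk : 0 < k)
    (F E : Type*) [Field F] [Fintype F] [Field E] [Fintype E] [Algebra F E]
    (hF : Fintype.card F = q) (hE : Fintype.card E = q ^ (2 * k))
    (g : F[X]) (hg : g.Monic) (hgdvd : g ∣ (X ^ (2 * k) - 1)) (hgdeg : g.natDegree = k)
    (β : E) (hord : IsOrd q β g) :
    g ≠ X ^ k - 1 ↔ Algebra.adjoin F {β} = ⊤ := by
  classical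
  have hq2 : 2 ≤ q := hq.two_le
  obtain ⟨p, e, hp, he, hpe⟩ := hq
  have hpp : p.Prime := hp.nat_prime
  haveI : CharP E (ringChar E) := ringChar.charP E
  obtain ⟨n', hp', hcard'⟩ := FiniteField.card E (ringChar E)
  have hpr : ringChar E = p := by
    have hd : p ∣ ringChar E ^ (n' : ℕ) := by
      rw [← hcard', hE, ← hpe]
      exact dvd_trans (dvd_pow_self p he.ne') (dvd_pow_self _ (by omega))
    have h2 := hpp.dvd_of_dvd_pow hd
    exact ((Nat.prime_dvd_prime_iff_eq hpp hp').mp h2).symm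
  haveI : CharP E p := hpr ▸ ringChar.charP E
  haveI : Fact p.Prime := ⟨hpp⟩
  have hsmul : ∀ (c : F) (x : E), (c • x) ^ q = c • x ^ q := by
    intro c x
    rw [Algebra.smul_def, Algebra.smul_def, mul_pow, ← map_pow]
    congr 2
    rw [← hF]
    exact FiniteField.pow_card c
  let σ : E →ₗ[F] E :=
    { toFun := fun x => x ^ q
      map_add' := fun x y => by
        show (x + y) ^ q = x ^ q + y ^ q
        rw [← hpe]; exact add_pow_expChar_pow x y p e
      map_smul' := fun c x => hsmul c x }
  have hσ : ∀ x : E, σ x = x ^ q := fun _ => rfl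
  have hrank : Module.finrank F E = 2 * k := by
    have hcard := Module.card_eq_pow_finrank (K := F) (V := E)
    rw [hF, hE] at hcard
    exact (Nat.pow_right_injective hq2 hcard).symm
  have hgdeg' : g.degree = (k : WithBot ℕ) := by
    rw [degree_eq_natDegree hg.ne_zero, hgdeg]
  have hXk : (X ^ k - 1 : F[X]).Monic := by
    have h1 : ((1 : F[X])).degree < (k : WithBot ℕ) := by
      rw [degree_one]
      exact_mod_cast Nat.cast_lt.mpr hk
    exact monic_X_pow_sub h1
  constructor
  · intro hne
    have hint : IsIntegral F β := IsIntegral.of_finite F β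
    set K := IntermediateField.adjoin F {β} with hKdef
    set m := Module.finrank F K with hm
    letI : Fintype K := Fintype.ofFinite K
    have hcardK : Fintype.card K = q ^ m := by
      rw [Module.card_eq_pow_finrank (K := F) (V := K), hF]
    have hmem : β ∈ K := IntermediateField.mem_adjoin_simple_self F β
    have hβm : β ^ q ^ m = β := by
      have h1 := FiniteField.pow_card (⟨β, hmem⟩ : K)
      rw [hcardK] at h1
      have h2 := congrArg Subtype.val h1
      simpa using h2
    have hdvd2k : m ∣ 2 * k :=
      ⟨Module.finrank K E, by rw [← hrank, ← Module.finrank_mul_finrank F K E]⟩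
    have hmpos : 0 < m := Module.finrank_pos
    have hm2k : m = 2 * k := by
      by_contra hne2
      have hmk : m ≤ k := by
        obtain ⟨c, hc⟩ := hdvd2k
        have hc1 : c ≠ 1 := by rintro rfl; omega
        have hc0 : c ≠ 0 := by rintro rfl; omega
        have h2c : 2 ≤ c := by omega
        have : m * 2 ≤ m * c := Nat.mul_le_mul_left m h2c
        omega
      have hz : Lf q (X ^ m - 1 : F[X]) β = 0 := by
        rw [Lf_X_pow_sub_one q σ hσ, hβm, sub_self]
      have hmon : (X ^ m - 1 : F[X]).Monic := by
        have h1 : ((1 : F[X])).degree < (m : WithBot ℕ) := by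
          rw [degree_one]
          exact_mod_cast Nat.cast_lt.mpr hmpos
        exact monic_X_pow_sub h1
      have hle := hord.2.2 _ hmon hz
      rw [hgdeg'] at hle
      have hdegm : (X ^ m - 1 : F[X]).degree = (m : WithBot ℕ) := by
        rw [show (X ^ m - 1 : F[X]) = X ^ m - C 1 by rw [C_1]]
        exact degree_X_pow_sub_C hmpos 1
      rw [hdegm] at hle
      have hkm : k ≤ m := by exact_mod_cast hle
      have hmk' : m = k := le_antisymm hmk hkm
      have hdvd : g ∣ (X ^ k - 1 : F[X]) := by
        apply ord_dvd q σ hσ hord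
        rw [← hmk']
        exact hz
      have hgk : (X ^ k - 1 : F[X]) = g := by
        apply eq_of_monic_of_dvd_of_natDegree_le hg hXk hdvd
        rw [hgdeg]
        have hdk : (X ^ k - 1 : F[X]).degree = (k : WithBot ℕ) := by
          rw [show (X ^ k - 1 : F[X]) = X ^ k - C 1 by rw [C_1]]
          exact degree_X_pow_sub_C hk 1
        rw [natDegree_eq_of_degree_eq_some hdk]
      exact hne hgk.symm
    have hKsub : K.toSubalgebra = ⊤ := by
      rw [← Algebra.toSubmodule_eq_top]
      apply Submodule.eq_top_of_finrank_eq
      rw [K.toSubalgebra.finrank_toSubmodule, hrank]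
      exact hm2k
    rw [← IntermediateField.adjoin_simple_toSubalgebra_of_isAlgebraic hint.isAlgebraic]
    exact hKsub
  · intro htop hgk
    have hβk : β ^ q ^ k = β := by
      have h1 := hord.2.1
      rw [hgk, Lf_X_pow_sub_one q σ hσ] at h1
      exact sub_eq_zero.mp h1
    let φ : E →ₐ[F] E :=
      { toFun := fun x => x ^ q ^ k
        map_one' := one_pow _
        map_mul' := fun x y => mul_pow x y _
        map_zero' := zero_pow (by positivity)
        map_add' := fun x y => by
          show (x + y) ^ q ^ k = x ^ q ^ k + y ^ q ^ k
          rw [← hpe, ← pow_mul]; exact add_pow_expChar_pow x y p (e * k)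
        commutes' := fun c => by
          show (algebraMap F E c) ^ q ^ k = algebraMap F E c
          rw [← map_pow]
          congr 1
          rw [← hF]
          exact FiniteField.pow_card_pow k c }
    have hfix : ∀ x : E, x ^ q ^ k = x := by
      have hle : Algebra.adjoin F {β} ≤ AlgHom.equalizer φ (AlgHom.id F E) := by
        apply Algebra.adjoin_le
        intro b hb
        rw [Set.mem_singleton_iff] at hb
        subst hb
        exact SetLike.mem_coe.mpr ((AlgHom.mem_equalizer φ (AlgHom.id F E) b).mpr hβk)
      rw [htop] at hle
      intro x
      exact hle (Algebra.mem_top (x := x))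
    set P : E[X] := X ^ q ^ k - X with hP
    have hq1 : 1 < q := by omega
    have hPne : P ≠ 0 := FiniteField.X_pow_card_pow_sub_X_ne_zero E hk.ne' hq1
    have hdegP : P.natDegree = q ^ k :=
      FiniteField.X_pow_card_pow_sub_X_natDegree_eq E hk.ne' hq1
    have hsub : (Finset.univ : Finset E) ⊆ P.roots.toFinset := by
      intro x _
      rw [Multiset.mem_toFinset, mem_roots hPne]
      simp [hP, IsRoot, hfix x]
    have hcardle : Fintype.card E ≤ q ^ k := by
      calc Fintype.card E = (Finset.univ : Finset E).card := rfl
        _ ≤ P.roots.toFinset.card := Finset.card_le_card hsub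
        _ ≤ Multiset.card P.roots := Multiset.toFinset_card_le _
        _ ≤ P.natDegree := P.card_roots'
        _ = q ^ k := hdegP
    rw [hE] at hcardle
    have hlt : q ^ k < q ^ (2 * k) := Nat.pow_lt_pow_right hq1 (by omega)
    omega
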